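/- If a flow of value k·ρ saturates all facility-to-sink edges of capacity ρ in the bipartite client–facility flow network, then for every nonempty set T of facilities, |T|·ρ ≤ w(A(T)); i.e., ρ is at most the minimum neighborhood ratio. -/
import Mathlib


open Finset

/-- Total weight of the attraction set of a facility set `T`: clients having an
accessible facility in `T`. -/
def wA {n k : ℕ} (w : Fin n → ℝ) (N : Fin n → Finset (Fin k))
    (T : Finset (Fin k)) : ℝ :=
  ∑ i ∈ Finset.univ.filter (fun i => (N i ∩ T).Nonempty), w i

/-- If a flow saturates all facility-to-sink edges of capacity `ρ` in the
client–facility network (flow `x i j` from client `i` to facility `j`, respecting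
accessibility and source capacities `w i`), then `|T| · ρ ≤ w(A(T))` for every
nonempty facility set `T`; i.e. `ρ` is at most the minimum neighborhood ratio. -/
theorem saturating_flow_bounds_ratio (n k : ℕ)
    (w : Fin n → ℝ) (hw : ∀ i, 0 < w i) (N : Fin n → Finset (Fin k)) (ρ : ℝ)
    (x : Fin n → Fin k → ℝ)
    (hnn : ∀ i j, 0 ≤ x i j)
    (hsupp : ∀ i j, j ∉ N i → x i j = 0)
    (hsource : ∀ i, ∑ j, x i j ≤ w i)
    (hsat : ∀ j, ∑ i, x i j = ρ) :
    ∀ T : Finset (Fin k), T.Nonempty → (T.card : ℝ) * ρ ≤ wA w N T := by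
  intro T hT
  set A := Finset.univ.filter (fun i => (N i ∩ T).Nonempty) with hA
  have key : (T.card : ℝ) * ρ = ∑ i ∈ A, ∑ j ∈ T, x i j := by
    have h1 : ∑ j ∈ T, ∑ i, x i j = (T.card : ℝ) * ρ := by
      simp [hsat, mul_comm]
    rw [← h1, Finset.sum_comm]
    rw [← Finset.sum_filter_add_sum_filter_not Finset.univ
      (fun i => (N i ∩ T).Nonempty) (fun i => ∑ j ∈ T, x i j)]
    have h2 : ∑ i ∈ Finset.univ.filter (fun i => ¬ (N i ∩ T).Nonempty),
        ∑ j ∈ T, x i j = 0 := by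
      apply Finset.sum_eq_zero
      intro i hi
      simp only [Finset.mem_filter, Finset.not_nonempty_iff_eq_empty] at hi
      apply Finset.sum_eq_zero
      intro j hj
      apply hsupp
      intro hjN
      have : j ∈ N i ∩ T := Finset.mem_inter.mpr ⟨hjN, hj⟩
      simp [hi.2] at this
    rw [h2, add_zero]
  rw [key, wA]
  apply Finset.sum_le_sum
  intro i _
  calc ∑ j ∈ T, x i j ≤ ∑ j, x i j :=
        Finset.sum_le_sum_of_subset_of_nonneg (Finset.subset_univ T)
          (fun j _ _ => hnn i j)
    _ ≤ w i := hsource i
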